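/- Given c¹, c² ∈ ℕ^n and k₁, k₂ ∈ ℕ, consider the directed graph G constructed as follows: nodes are s = v₁¹, v₂¹, …, v_{n+1}¹ = t, nodes v₁², …, v_n², and an extra node v; arcs are (v_i¹, v_i²) with cost (c¹_i, 0), (v_i¹, v_{i+1}¹) with cost (0, c²_i), (v_i², v_{i+1}¹) with cost (0,0) for each 1 ≤ i ≤ n, plus an arc (s,t) with cost (k₁+1, 0) and a path (s,v,t) with total cost (0, Σᵢc²ᵢ − k₂ + 1). Then there exists an s-t-path in G with cost (y₁, y₂) satisfying y₁ ≤ k₁ and y₂ ≤ Σᵢ c²ᵢ − k₂ if and only if there exists x ∈ {0,1}^n with (c¹)^T x ≤ k₁ and (c²)^T x ≥ k₂. -/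

import Mathlib

/-- Vertices of the Knapsack reduction graph: `a i` are the nodes `v_{i+1}¹` (so `a 0 = s`
and `a n = t`), `b i` are the nodes `v_{i+1}²`, and `extra` is the detour node `v`. -/
inductive KPVertex (n : ℕ) where
  | a : Fin (n + 1) → KPVertex n
  | b : Fin n → KPVertex n
  | extra : KPVertex n

/-- The arcs of the Knapsack reduction graph together with their biobjective costs. -/
def KPEdge (n : ℕ) (c1 c2 : Fin n → ℕ) (k1 k2 : ℕ) :
    KPVertex n → KPVertex n → ℕ × ℕ → Prop := fun u w cost =>
  (∃ i : Fin n, u = .a i.castSucc ∧ w = .b i ∧ cost = (c1 i, 0)) ∨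
  (∃ i : Fin n, u = .a i.castSucc ∧ w = .a i.succ ∧ cost = (0, c2 i)) ∨
  (∃ i : Fin n, u = .b i ∧ w = .a i.succ ∧ cost = (0, 0)) ∨
  (u = .a 0 ∧ w = .a (Fin.last n) ∧ cost = (k1 + 1, 0)) ∨
  (u = .a 0 ∧ w = .extra ∧ cost = (0, (∑ i, c2 i) - k2 + 1)) ∨
  (u = .extra ∧ w = .a (Fin.last n) ∧ cost = (0, 0))

/-- `ReachCost E s v y`: there is a path from `s` to `v` in the graph with arc relation `E`
whose total (componentwise summed) cost is `y`. -/
inductive ReachCost {α : Type*} (E : α → α → ℕ × ℕ → Prop) (s : α) : α → ℕ × ℕ → Prop where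
  | base : ReachCost E s s (0, 0)
  | step {u w : α} {y c : ℕ × ℕ} :
      ReachCost E s u y → E u w c → ReachCost E s w (y.1 + c.1, y.2 + c.2)

section auxlemmas
variable {n : ℕ}

lemma sum_ite_lt_succ (p : Fin n → Prop) [DecidablePred p] (g : Fin n → ℕ) (i : Fin n) :
    (∑ j, if j.val < i.val + 1 ∧ p j then g j else 0)
      = (∑ j, if j.val < i.val ∧ p j then g j else 0) + (if p i then g i else 0) := by
  rw [← Finset.sum_erase_add _ _ (Finset.mem_univ i),
      ← Finset.sum_erase_add _ _ (Finset.mem_univ i)]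
  have h2 : (if (i : ℕ) < (i : ℕ) ∧ p i then g i else 0) = 0 := by simp
  rw [h2, add_zero]
  congr 1
  · refine Finset.sum_congr rfl fun j hj => ?_
    have hji : (j : ℕ) ≠ (i : ℕ) := fun h => (Finset.ne_of_mem_erase hj) (Fin.ext h)
    have : ((j : ℕ) < (i : ℕ) + 1 ∧ p j) ↔ ((j : ℕ) < (i : ℕ) ∧ p j) := by
      constructor <;> rintro ⟨h, hp⟩ <;> exact ⟨by omega, hp⟩
    exact if_congr this rfl rfl
  · simp

lemma sum_ite_congr_lt {P Q : Fin n → Prop} [DecidablePred P] [DecidablePred Q]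
    (g : Fin n → ℕ) (m : ℕ) (h : ∀ j : Fin n, (j : ℕ) < m → (P j ↔ Q j)) :
    (∑ j : Fin n, if (j : ℕ) < m ∧ P j then g j else 0)
      = ∑ j : Fin n, if (j : ℕ) < m ∧ Q j then g j else 0 := by
  refine Finset.sum_congr rfl fun j _ => ?_
  by_cases hj : (j : ℕ) < m
  · simp only [hj, true_and]
    by_cases hp : P j
    · rw [if_pos hp, if_pos ((h j hj).1 hp)]
    · rw [if_neg hp, if_neg (fun hq => hp ((h j hj).2 hq))]
  · simp [hj]

lemma sum_ite_partition (x : Fin n → Bool) (g : Fin n → ℕ) :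
    (∑ i, if x i then g i else 0) + (∑ i, if ¬ x i then g i else 0) = ∑ i, g i := by
  rw [← Finset.sum_add_distrib]
  refine Finset.sum_congr rfl fun i _ => ?_
  by_cases h : x i <;> simp [h]

end auxlemmas

/-- Invariant carried along any path from `s` in the reduction graph. -/
def KPInv (n k1 k2 : ℕ) (c1 c2 : Fin n → ℕ) : KPVertex n → ℕ × ℕ → Prop
  | .a j, y =>
      (∃ x : Fin n → Bool,
        y.1 = (∑ i : Fin n, if (i : ℕ) < (j : ℕ) ∧ x i then c1 i else 0) ∧
        y.2 = (∑ i : Fin n, if (i : ℕ) < (j : ℕ) ∧ ¬ x i then c2 i else 0)) ∨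
      (j = Fin.last n ∧ (k1 < y.1 ∨ (∑ i, c2 i) - k2 < y.2))
  | .b i, y =>
      ∃ x : Fin n → Bool,
        y.1 = (∑ i' : Fin n, if (i' : ℕ) < (i : ℕ) ∧ x i' then c1 i' else 0) + c1 i ∧
        y.2 = (∑ i' : Fin n, if (i' : ℕ) < (i : ℕ) ∧ ¬ x i' then c2 i' else 0)
  | .extra, y => y = (0, (∑ i, c2 i) - k2 + 1)

lemma kp_inv {n k1 k2 : ℕ} {c1 c2 : Fin n → ℕ} (hn : 0 < n) {v : KPVertex n} {y : ℕ × ℕ}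
    (h : ReachCost (KPEdge n c1 c2 k1 k2) (.a 0) v y) : KPInv n k1 k2 c1 c2 v y := by
  induction h with
  | base =>
      left
      exact ⟨fun _ => false, by simp, by simp⟩
  | @step u w y c h e ih =>
      rcases e with ⟨i, rfl, rfl, rfl⟩ | ⟨i, rfl, rfl, rfl⟩ | ⟨i, rfl, rfl, rfl⟩ |
        ⟨rfl, rfl, rfl⟩ | ⟨rfl, rfl, rfl⟩ | ⟨rfl, rfl, rfl⟩
      · -- a (castSucc i) → b i, cost (c1 i, 0)
        rcases ih with ⟨x, hx1, hx2⟩ | ⟨hlast, _⟩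
        · exact ⟨x, by simpa using hx1, by simpa using hx2⟩
        · exact absurd (congrArg Fin.val hlast) (by simp; omega)
      · -- a (castSucc i) → a (succ i), cost (0, c2 i)
        rcases ih with ⟨x, hx1, hx2⟩ | ⟨hlast, _⟩
        · left
          refine ⟨Function.update x i false, ?_, ?_⟩
          · simp only [Fin.val_succ, add_zero]
            rw [sum_ite_lt_succ (fun j => (Function.update x i false j : Prop)) c1 i]
            simp only [Function.update_self, Bool.false_eq_true, if_false, add_zero]
            rw [sum_ite_congr_lt (Q := fun j => (x j : Prop)) c1 (i : ℕ)
              (fun j hj => by rw [Function.update_of_ne (fun h => by subst h; omega)])]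
            simpa using hx1
          · simp only [Fin.val_succ]
            rw [sum_ite_lt_succ (fun j => ¬ (Function.update x i false j : Prop)) c2 i]
            simp only [Function.update_self, Bool.false_eq_true, not_false_iff, if_true]
            rw [sum_ite_congr_lt (Q := fun j => ¬ (x j : Prop)) c2 (i : ℕ)
              (fun j hj => by rw [Function.update_of_ne (fun h => by subst h; omega)])]
            simp only [Fin.coe_castSucc] at hx2
            rw [hx2]
        · exact absurd (congrArg Fin.val hlast) (by simp; omega)
      · -- b i → a (succ i), cost (0, 0)
        rcases ih with ⟨x, hx1, hx2⟩
        left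
        refine ⟨Function.update x i true, ?_, ?_⟩
        · simp only [Fin.val_succ, add_zero]
          rw [sum_ite_lt_succ (fun j => (Function.update x i true j : Prop)) c1 i]
          simp only [Function.update_self, if_true]
          rw [sum_ite_congr_lt (Q := fun j => (x j : Prop)) c1 (i : ℕ)
            (fun j hj => by rw [Function.update_of_ne (fun h => by subst h; omega)])]
          exact hx1
        · simp only [Fin.val_succ, add_zero]
          rw [sum_ite_lt_succ (fun j => ¬ (Function.update x i true j : Prop)) c2 i]
          simp only [Function.update_self, not_true, if_false, add_zero]
          rw [sum_ite_congr_lt (Q := fun j => ¬ (x j : Prop)) c2 (i : ℕ)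
            (fun j hj => by rw [Function.update_of_ne (fun h => by subst h; omega)])]
          exact hx2
      · -- a 0 → a (last n), cost (k1+1, 0)
        rcases ih with ⟨x, hx1, hx2⟩ | ⟨hlast, _⟩
        · right
          refine ⟨rfl, Or.inl ?_⟩
          simp only [Fin.val_zero] at hx1
          simp [hx1]
        · exact absurd (congrArg Fin.val hlast) (by simp; omega)
      · -- a 0 → extra
        rcases ih with ⟨x, hx1, hx2⟩ | ⟨hlast, _⟩
        · simp only [Fin.val_zero] at hx1 hx2
          simp only [KPInv]
          have : y.1 = 0 := by simpa using hx1
          have h2 : y.2 = 0 := by simpa using hx2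
          simp [this, h2, Prod.ext_iff]
        · exact absurd (congrArg Fin.val hlast) (by simp; omega)
      · -- extra → a (last n)
        right
        refine ⟨rfl, Or.inr ?_⟩
        have : y.2 = (∑ i, c2 i) - k2 + 1 := by rw [ih]
        simp [this]

/-- There is an `s`-`t`-path of cost `(y₁,y₂)` with `y₁ ≤ k₁` and `y₂ ≤ Σᵢc²ᵢ − k₂` in the
reduction graph iff there is `x ∈ {0,1}ⁿ` with `(c¹)ᵀx ≤ k₁` and `(c²)ᵀx ≥ k₂`. -/
theorem stmt_3 (n k1 k2 : ℕ) (c1 c2 : Fin n → ℕ)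
    (hc1 : ∀ i, 0 < c1 i) (hc2 : ∀ i, 0 < c2 i)
    (h1 : k1 < ∑ i, c1 i) (h2 : k2 < ∑ i, c2 i) :
    (∃ y : ℕ × ℕ,
      ReachCost (KPEdge n c1 c2 k1 k2) (.a 0) (.a (Fin.last n)) y ∧
      y.1 ≤ k1 ∧ y.2 ≤ (∑ i, c2 i) - k2) ↔
    (∃ x : Fin n → Bool,
      (∑ i, if x i then c1 i else 0) ≤ k1 ∧ k2 ≤ ∑ i, if x i then c2 i else 0) := by
  have hn : 0 < n := by
    rcases Nat.eq_zero_or_pos n with rfl | h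
    · simp at h1
    · exact h
  constructor
  · rintro ⟨y, hreach, hy1, hy2⟩
    have hinv := kp_inv hn hreach
    rcases hinv with ⟨x, hx1, hx2⟩ | ⟨_, hbad⟩
    · refine ⟨x, ?_, ?_⟩
      · have : (∑ i, if x i then c1 i else 0)
            = ∑ i : Fin n, if (i : ℕ) < ((Fin.last n : Fin (n+1)) : ℕ) ∧ x i then c1 i else 0 := by
          refine Finset.sum_congr rfl fun i _ => ?_
          simp [Fin.val_last, i.isLt]
        rw [this, ← hx1]; exact hy1
      · have hB : y.2 = ∑ i, if ¬ x i then c2 i else 0 := by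
          rw [hx2]
          refine Finset.sum_congr rfl fun i _ => ?_
          simp [Fin.val_last, i.isLt]
        have hpart := sum_ite_partition x c2
        omega
    · omega
  · rintro ⟨x, hx1, hx2⟩
    have key : ∀ j : Fin (n + 1),
        ReachCost (KPEdge n c1 c2 k1 k2) (.a 0) (.a j)
          ((∑ i : Fin n, if (i : ℕ) < (j : ℕ) ∧ x i then c1 i else 0),
           (∑ i : Fin n, if (i : ℕ) < (j : ℕ) ∧ ¬ x i then c2 i else 0)) := by
      intro j
      induction j using Fin.induction with
      | zero => simpa using ReachCost.base
      | succ i ih =>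
          by_cases hxi : x i
          · have step1 := ReachCost.step ih
              (show KPEdge n c1 c2 k1 k2 _ (.b i) (c1 i, 0) from Or.inl ⟨i, rfl, rfl, rfl⟩)
            have step2 := ReachCost.step step1
              (show KPEdge n c1 c2 k1 k2 _ (.a i.succ) (0, 0) from
                Or.inr (Or.inr (Or.inl ⟨i, rfl, rfl, rfl⟩)))
            simp only [Fin.coe_castSucc, add_zero] at step2
            have e1 : (∑ i' : Fin n, if (i' : ℕ) < ((i.succ : Fin (n+1)) : ℕ) ∧ x i' then c1 i' else 0)
                = (∑ i' : Fin n, if (i' : ℕ) < (i : ℕ) ∧ x i' then c1 i' else 0) + c1 i := by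
              rw [Fin.val_succ, sum_ite_lt_succ (fun j => (x j : Prop)) c1 i, if_pos hxi]
            have e2 : (∑ i' : Fin n, if (i' : ℕ) < ((i.succ : Fin (n+1)) : ℕ) ∧ ¬ x i' then c2 i' else 0)
                = (∑ i' : Fin n, if (i' : ℕ) < (i : ℕ) ∧ ¬ x i' then c2 i' else 0) := by
              rw [Fin.val_succ, sum_ite_lt_succ (fun j => ¬ (x j : Prop)) c2 i,
                if_neg (by simp [hxi]), add_zero]
            rw [e1, e2]
            exact step2
          · have step1 := ReachCost.step ih
              (show KPEdge n c1 c2 k1 k2 _ (.a i.succ) (0, c2 i) from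
                Or.inr (Or.inl ⟨i, rfl, rfl, rfl⟩))
            simp only [Fin.coe_castSucc, add_zero] at step1
            have e1 : (∑ i' : Fin n, if (i' : ℕ) < ((i.succ : Fin (n+1)) : ℕ) ∧ x i' then c1 i' else 0)
                = (∑ i' : Fin n, if (i' : ℕ) < (i : ℕ) ∧ x i' then c1 i' else 0) := by
              rw [Fin.val_succ, sum_ite_lt_succ (fun j => (x j : Prop)) c1 i,
                if_neg (by simp [hxi]), add_zero]
            have e2 : (∑ i' : Fin n, if (i' : ℕ) < ((i.succ : Fin (n+1)) : ℕ) ∧ ¬ x i' then c2 i' else 0)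
                = (∑ i' : Fin n, if (i' : ℕ) < (i : ℕ) ∧ ¬ x i' then c2 i' else 0) + c2 i := by
              rw [Fin.val_succ, sum_ite_lt_succ (fun j => ¬ (x j : Prop)) c2 i,
                if_pos (by simp [hxi])]
            rw [e1, e2]
            exact step1
    have hlast := key (Fin.last n)
    have eA : (∑ i : Fin n, if (i : ℕ) < ((Fin.last n : Fin (n+1)) : ℕ) ∧ x i then c1 i else 0)
        = ∑ i, if x i then c1 i else 0 := by
      refine Finset.sum_congr rfl fun i _ => ?_
      simp [Fin.val_last, i.isLt]
    have eB : (∑ i : Fin n, if (i : ℕ) < ((Fin.last n : Fin (n+1)) : ℕ) ∧ ¬ x i then c2 i else 0)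
        = ∑ i, if ¬ x i then c2 i else 0 := by
      refine Finset.sum_congr rfl fun i _ => ?_
      simp [Fin.val_last, i.isLt]
    rw [eA, eB] at hlast
    refine ⟨_, hlast, hx1, ?_⟩
    have hpart := sum_ite_partition x c2
    simp only
    omega
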